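/- Code normal factor graph duality theorem (Forney's normal graph duality theorem in NFG form): Let G = (V, E_int, E_ext, f_V) be an NFG in which every edge alphabet X_e is a finite abelian group and every local function f_v is the indicator function of a subgroup C_v ≤ ∏_{e∈E(v)} X_e. Let B ≤ (∏_{e∈E_ext} X_e) × (∏_{e∈E_int} X_e) be the global behavior, i.e., the subgroup of all configurations (x_{E_ext}, x_{E_int}) satisfying all local constraints, let C ≤ ∏_{e∈E_ext} X_e be its projection onto the external coordinates (the realized code), and let σ := |{x_{E_int} : (0, x_{E_int}) ∈ B}|, so that Z_G = σ · 1_C. Then the dual NFG Ĝ (obtained by replacing each f_v by its Fourier transform and inserting a δ_+ vertex into each internal edge) satisfies Z_Ĝ = |X_{E_int}| · σ · |C| · 1_{C^⊥}, where C^⊥ := {x̂ ∈ ∏_{e∈E_ext} X_e^∧ : ∏_{e∈E_ext} x̂_e(c_e) = 1 for all c ∈ C} is the dual code. In particular, the dual NFG realizes, up to a positive scale factor, the indicator function of the dual code. -/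

import Mathlib

open scoped BigOperators Classical

/-! # Normal factor graphs -/

/-- `Inc ends extEnd v e` means edge `e` is incident to vertex `v`. -/
def Inc {V Ei Ee : Type} (ends : Ei → V × V) (extEnd : Ee → V) (v : V) :
    Ei ⊕ Ee → Prop
  | .inl i => (ends i).1 = v ∨ (ends i).2 = v
  | .inr j => extEnd j = v

/-- Combine an internal and an external configuration into a configuration on all edges. -/
def combine {Ei Ee : Type} {X : Ei ⊕ Ee → Type}
    (xi : ∀ i : Ei, X (.inl i)) (xe : ∀ j : Ee, X (.inr j)) : ∀ e, X e
  | .inl i => xi i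
  | .inr j => xe j

/-- The exterior function realized by a normal factor graph. -/
noncomputable def Zfun {V Ei Ee : Type} [Fintype V] [Fintype Ei]
    (X : Ei ⊕ Ee → Type) [∀ e, Fintype (X e)]
    (ends : Ei → V × V) (extEnd : Ee → V)
    (f : ∀ v : V, ((e : {e : Ei ⊕ Ee // Inc ends extEnd v e}) → X e.1) → ℂ)
    (xe : ∀ j : Ee, X (.inr j)) : ℂ :=
  ∑ xi : ∀ i : Ei, X (.inl i), ∏ v : V, f v fun e => combine xi xe e.1

/-! ## The dual NFG

The dual NFG `Ĝ` of `G` has vertices `V ⊕ Ei` (one new `δ₊` vertex in the middle of each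
internal edge), internal edges `Ei ⊕ Ei` (the two halves of each original internal edge),
and external edges `Ee`.  Each (half-)edge coming from an edge `e` of `G` carries the
character group `(X e)^∧ = AddChar (X e) ℂ`; each original vertex carries the Fourier
transform of its local function, and each new vertex carries `δ₊`. -/

section DualNFG

variable {V Ei Ee : Type} (X : Ei ⊕ Ee → Type) [∀ e, AddCommGroup (X e)]
  (ends : Ei → V × V) (extEnd : Ee → V)

/-- Edge alphabets of the dual NFG: character groups. -/
@[reducible] def Xhat : (Ei ⊕ Ei) ⊕ Ee → Type
  | .inl (.inl i) => AddChar (X (.inl i)) ℂ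
  | .inl (.inr i) => AddChar (X (.inl i)) ℂ
  | .inr j => AddChar (X (.inr j)) ℂ

noncomputable instance XhatFintype [∀ e, Fintype (X e)] : ∀ e, Fintype (Xhat X e)
  | .inl (.inl i) => inferInstanceAs (Fintype (AddChar (X (.inl i)) ℂ))
  | .inl (.inr i) => inferInstanceAs (Fintype (AddChar (X (.inl i)) ℂ))
  | .inr j => inferInstanceAs (Fintype (AddChar (X (.inr j)) ℂ))

/-- Endpoints of the internal edges of the dual NFG: `.inl i` is the half of `i` from
`(ends i).1` to the new vertex `i`, and `.inr i` the half from the new vertex `i`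
to `(ends i).2`. -/
def dEnds : Ei ⊕ Ei → (V ⊕ Ei) × (V ⊕ Ei)
  | .inl i => (.inl (ends i).1, .inr i)
  | .inr i => (.inr i, .inl (ends i).2)

/-- Attachment of the external edges of the dual NFG. -/
def dExtEnd : Ee → V ⊕ Ei := fun j => .inl (extEnd j)

/-- The character attached by a dual configuration `ψ` at vertex `v` to an original edge
slot `e` incident to `v`. -/
noncomputable def charAt (v : V)
    (ψ : (e' : {e' : (Ei ⊕ Ei) ⊕ Ee //
        Inc (dEnds ends) (dExtEnd extEnd) (.inl v) e'}) → Xhat X e'.1) :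
    (e : {e : Ei ⊕ Ee // Inc ends extEnd v e}) → AddChar (X e.1) ℂ :=
  fun e =>
    match e with
    | ⟨.inl i, h⟩ =>
        if h1 : (ends i).1 = v then
          ψ ⟨.inl (.inl i), Or.inl (congrArg (Sum.inl : V → V ⊕ Ei) h1)⟩
        else
          ψ ⟨.inl (.inr i), Or.inr (congrArg (Sum.inl : V → V ⊕ Ei)
              (h.resolve_left h1))⟩
    | ⟨.inr j, h⟩ => ψ ⟨.inr j, congrArg (Sum.inl : V → V ⊕ Ei) h⟩

/-- Local functions of the dual NFG: each original vertex `v` carries the Fourier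
transform `F[f v]` of its local function, and each new vertex (one per original internal
edge) carries `δ₊`, the indicator that the two adjacent characters sum to zero (written
multiplicatively: their product is the trivial character). -/
noncomputable def dualF [Fintype Ei] [Fintype Ee] [∀ e, Fintype (X e)]
    (f : ∀ v : V, ((e : {e : Ei ⊕ Ee // Inc ends extEnd v e}) → X e.1) → ℂ) :
    ∀ w : V ⊕ Ei,
      ((e' : {e' : (Ei ⊕ Ei) ⊕ Ee //
          Inc (dEnds ends) (dExtEnd extEnd) w e'}) → Xhat X e'.1) → ℂ
  | .inl v => fun ψ =>
      ∑ xv : (e : {e : Ei ⊕ Ee // Inc ends extEnd v e}) → X e.1,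
        f v xv * ∏ e : {e : Ei ⊕ Ee // Inc ends extEnd v e},
          (charAt X ends extEnd v ψ e) (xv e)
  | .inr i => fun ψ =>
      if (ψ ⟨.inl (.inl i), Or.inr rfl⟩) * (ψ ⟨.inl (.inr i), Or.inl rfl⟩) = 1
      then 1 else 0

end DualNFG


section Aux2
variable {V Ei Ee : Type} (ends : Ei → V × V) (extEnd : Ee → V)

variable {V Ei Ee : Type} (ends : Ei → V × V) (extEnd : Ee → V)

/-- The half-edge slots of the graph: pairs (vertex, incident edge). -/
noncomputable def slotEquiv (hne : ∀ i : Ei, (ends i).1 ≠ (ends i).2) :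
    (Ei ⊕ Ei) ⊕ Ee ≃ Σ v : V, {e : Ei ⊕ Ee // Inc ends extEnd v e} where
  toFun := fun s =>
    match s with
    | .inl (.inl i) => ⟨(ends i).1, ⟨.inl i, Or.inl rfl⟩⟩
    | .inl (.inr i) => ⟨(ends i).2, ⟨.inl i, Or.inr rfl⟩⟩
    | .inr j => ⟨extEnd j, ⟨.inr j, rfl⟩⟩
  invFun := fun p =>
    match p with
    | ⟨v, ⟨.inl i, _⟩⟩ => if (ends i).1 = v then .inl (.inl i) else .inl (.inr i)
    | ⟨v, ⟨.inr j, _⟩⟩ => .inr j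
  left_inv := by
    rintro ((i | i) | j)
    · simp
    · simp [hne i]
    · rfl
  right_inv := by
    rintro ⟨v, ⟨(i | j), h⟩⟩
    · by_cases h1 : (ends i).1 = v
      · subst h1; simp
      · have h2 : (ends i).2 = v := h.resolve_left h1
        subst h2; simp [h1]
    · subst h; rfl

lemma prod_incident [Fintype V] [Fintype Ei] [Fintype Ee]
    (hne : ∀ i : Ei, (ends i).1 ≠ (ends i).2)
    (F : ∀ v : V, {e : Ei ⊕ Ee // Inc ends extEnd v e} → ℂ) :
    (∏ v : V, ∏ e : {e : Ei ⊕ Ee // Inc ends extEnd v e}, F v e)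
      = (∏ i : Ei, F (ends i).1 ⟨.inl i, Or.inl rfl⟩ * F (ends i).2 ⟨.inl i, Or.inr rfl⟩)
        * ∏ j : Ee, F (extEnd j) ⟨.inr j, rfl⟩ := by
  have h1 : (∏ p : Σ v : V, {e : Ei ⊕ Ee // Inc ends extEnd v e}, F p.1 p.2)
      = ∏ v : V, ∏ e : {e : Ei ⊕ Ee // Inc ends extEnd v e}, F v e := by
    rw [← Finset.univ_sigma_univ, Finset.prod_sigma]
  rw [← h1, ← Equiv.prod_comp (slotEquiv ends extEnd hne) (fun p => F p.1 p.2),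
    Fintype.prod_sum_type, Fintype.prod_sum_type, Finset.prod_mul_distrib]
  rfl

end Aux2


lemma fiber_count {P Q : Type} [AddCommGroup P] [AddCommGroup Q] [Fintype Q]
    (B : AddSubgroup (P × Q)) (xe : P) :
    (∑ xi : Q, if (xe, xi) ∈ B then (1:ℂ) else 0)
      = (Nat.card {xi : Q // ((0 : P), xi) ∈ B} : ℂ)
          * (if ∃ xi, (xe, xi) ∈ B then 1 else 0) := by
  by_cases h : ∃ xi, (xe, xi) ∈ B
  · obtain ⟨xi₀, h0⟩ := h
    have e : {xi : Q // (xe, xi) ∈ B} ≃ {xi : Q // ((0 : P), xi) ∈ B} :=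
      { toFun := fun p => ⟨p.1 - xi₀, by
          have := B.sub_mem p.2 h0
          simpa using this⟩
        invFun := fun p => ⟨p.1 + xi₀, by
          have := B.add_mem p.2 h0
          simpa using this⟩
        left_inv := fun p => by ext; simp
        right_inv := fun p => by ext; simp }
    have hcard : Nat.card {xi : Q // ((0 : P), xi) ∈ B}
        = Nat.card {xi : Q // (xe, xi) ∈ B} := (Nat.card_congr e).symm
    rw [hcard, if_pos ⟨xi₀, h0⟩, mul_one]
    rw [Finset.sum_boole, Nat.card_eq_fintype_card, Fintype.card_subtype]
  · rw [if_neg h, mul_zero]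
    push_neg at h
    simp [h]



lemma sum_univ_inst {α : Type} (F1 F2 : Fintype α) (g : α → ℂ) :
    @Finset.sum α ℂ _ (@Finset.univ α F1) g = @Finset.sum α ℂ _ (@Finset.univ α F2) g := by
  rw [Subsingleton.elim F1 F2]

lemma char_pi_sum {Ei : Type} [Fintype Ei] (A : Ei → Type) [∀ i, AddCommGroup (A i)]
    [∀ i, Fintype (A i)] (d : ∀ i, A i) :
    (∑ χ : ∀ i, AddChar (A i) ℂ, ∏ i, χ i (d i))
      = (∏ i, (Fintype.card (A i) : ℂ)) * (if ∀ i, d i = 0 then 1 else 0) := by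
  classical
  rw [← Fintype.piFinset_univ, ← Finset.prod_univ_sum (fun _ => Finset.univ) (fun i (ψ : AddChar (A i) ℂ) => ψ (d i))]
  simp_rw [AddChar.sum_apply_eq_ite]
  have hsplit : ∀ i, (if d i = 0 then (Fintype.card (A i) : ℂ) else 0)
      = (Fintype.card (A i) : ℂ) * (if d i = 0 then 1 else 0) := by
    intro i; split_ifs <;> simp
  simp_rw [hsplit]
  rw [Finset.prod_mul_distrib, Fintype.prod_boole]

lemma sum_char_subgroup {Ee : Type} [Fintype Ee] (Y : Ee → Type) [∀ j, AddCommGroup (Y j)]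
    [∀ j, Fintype (Y j)] (Ccode : AddSubgroup (∀ j, Y j)) (ψe : ∀ j, AddChar (Y j) ℂ) :
    (∑ c : Ccode, ∏ j, ψe j ((c : ∀ j, Y j) j))
      = (Nat.card Ccode : ℂ)
          * (if (∀ c ∈ Ccode, ∏ j : Ee, ψe j (c j) = 1) then 1 else 0) := by
  classical
  let ψC : AddChar Ccode ℂ :=
    { toFun := fun c => ∏ j, ψe j ((c : ∀ j, Y j) j)
      map_zero_eq_one' := by simp
      map_add_eq_mul' := by
        intro a b
        simp only [AddSubgroup.coe_add, Pi.add_apply, AddChar.map_add_eq_mul]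
        rw [Finset.prod_mul_distrib] }
  have h := AddChar.sum_eq_ite ψC
  have hψC : ∀ c : Ccode, ψC c = ∏ j, ψe j ((c : ∀ j, Y j) j) := fun c => rfl
  simp_rw [← hψC]
  rw [h, Nat.card_eq_fintype_card]
  have hcond : (ψC = 0) ↔ (∀ c ∈ Ccode, ∏ j : Ee, ψe j (c j) = 1) := by
    rw [AddChar.eq_zero_iff]
    constructor
    · intro hz c hc; exact hz ⟨c, hc⟩
    · intro hz c; exact hz c.1 c.2
  split_ifs with h1 h2 h2
  · rw [mul_one]
  · exact absurd (hcond.1 h1) h2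
  · exact absurd (hcond.2 h2) h1
  · rw [mul_zero]



lemma glue_sum {V Ei Ee : Type} [Fintype V] [Fintype Ei] [Fintype Ee]
    (X : Ei ⊕ Ee → Type) [∀ e, AddCommGroup (X e)] [∀ e, Fintype (X e)]
    (ends : Ei → V × V) (extEnd : Ee → V)
    (C : ∀ v : V, AddSubgroup ((e : {e : Ei ⊕ Ee // Inc ends extEnd v e}) → X e.1))
    (B : AddSubgroup ((∀ j : Ee, X (.inr j)) × (∀ i : Ei, X (.inl i))))
    (hB : ∀ p : (∀ j : Ee, X (.inr j)) × (∀ i : Ei, X (.inl i)),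
      p ∈ B ↔ ∀ v : V, (fun e : {e : Ei ⊕ Ee // Inc ends extEnd v e} =>
          combine p.2 p.1 e.1) ∈ C v)
    (W : (∀ j : Ee, X (.inr j)) → ℂ) :
    (∑ x : ∀ v : V, (e : {e : Ei ⊕ Ee // Inc ends extEnd v e}) → X e.1,
        if ((∀ v, x v ∈ C v) ∧
            ∀ i : Ei, x (ends i).1 ⟨.inl i, Or.inl rfl⟩ = x (ends i).2 ⟨.inl i, Or.inr rfl⟩)
        then W (fun j => x (extEnd j) ⟨.inr j, rfl⟩) else 0)
      = ∑ p : (∀ j : Ee, X (.inr j)) × (∀ i : Ei, X (.inl i)),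
          if p ∈ B then W p.1 else 0 := by
  classical
  have claim : ∀ (x : ∀ v : V, (e : {e : Ei ⊕ Ee // Inc ends extEnd v e}) → X e.1),
      (∀ i : Ei, x (ends i).1 ⟨.inl i, Or.inl rfl⟩ = x (ends i).2 ⟨.inl i, Or.inr rfl⟩) →
      ∀ v : V, (fun e : {e : Ei ⊕ Ee // Inc ends extEnd v e} =>
          combine (fun i : Ei => x (ends i).1 ⟨.inl i, Or.inl rfl⟩)
            (fun j : Ee => x (extEnd j) ⟨.inr j, rfl⟩) e.1) = x v := by
    intro x hm v
    funext e
    obtain ⟨(i | j), h⟩ := e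
    · show x (ends i).1 ⟨.inl i, Or.inl rfl⟩ = x v ⟨.inl i, h⟩
      rcases h with h1 | h2
      · subst h1; rfl
      · subst h2; exact hm i
    · show x (extEnd j) ⟨.inr j, rfl⟩ = x v ⟨.inr j, h⟩
      subst h; rfl
  rw [← Finset.sum_filter, ← Finset.sum_filter]
  refine Finset.sum_nbij'
    (fun x => (fun j => x (extEnd j) ⟨.inr j, rfl⟩, fun i => x (ends i).1 ⟨.inl i, Or.inl rfl⟩))
    (fun p => fun v => fun e => combine p.2 p.1 e.1) ?_ ?_ ?_ ?_ ?_
  · intro x hx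
    simp only [Finset.mem_filter, Finset.mem_univ, true_and] at hx ⊢
    rw [hB]
    intro v
    rw [claim x hx.2 v]
    exact hx.1 v
  · intro p hp
    simp only [Finset.mem_filter, Finset.mem_univ, true_and] at hp
    exact Finset.mem_filter.mpr ⟨Finset.mem_univ _, fun v => (hB p).1 hp v, fun i => rfl⟩
  · intro x hx
    simp only [Finset.mem_filter, Finset.mem_univ, true_and] at hx
    funext v
    exact claim x hx.2 v
  · intro p hp
    rfl
  · intro x hx
    rfl

/-- **Code Normal Factor Graph Duality Theorem** (Forney's normal graph duality theorem
in NFG form).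
Let `G = (V, Ei, Ee, f)` be an NFG all of whose edge alphabets `X e` are finite abelian
groups and all of whose local functions are indicator functions of subgroups
`C v ≤ ∏_{e ∈ E(v)} X e`.  Let `B` be the global behavior (the subgroup of configurations
satisfying all local constraints), `Ccode` its projection onto the external coordinates
(the realized code) and `σ` the number of internal configurations compatible with the zero
external configuration, so that `Z_G = σ · 1_{Ccode}`.  Then the dual NFG `Ĝ` (each local
function replaced by its Fourier transform, a `δ₊` vertex inserted into each internal edge)
satisfies `Z_Ĝ = |X_{E_int}| · σ · |Ccode| · 1_{Ccode^⊥}`: up to a positive scale factor, `Ĝ`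
realizes the indicator function of the dual code. -/
theorem code_nfg_duality_theorem {V Ei Ee : Type}
    [Fintype V] [Fintype Ei] [Fintype Ee]
    (X : Ei ⊕ Ee → Type) [∀ e, AddCommGroup (X e)] [∀ e, Fintype (X e)]
    (ends : Ei → V × V) (hne : ∀ i : Ei, (ends i).1 ≠ (ends i).2)
    (extEnd : Ee → V)
    (f : ∀ v : V, ((e : {e : Ei ⊕ Ee // Inc ends extEnd v e}) → X e.1) → ℂ)
    (C : ∀ v : V, AddSubgroup ((e : {e : Ei ⊕ Ee // Inc ends extEnd v e}) → X e.1))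
    (hf : ∀ v x, f v x = if x ∈ C v then 1 else 0)
    (B : AddSubgroup ((∀ j : Ee, X (.inr j)) × (∀ i : Ei, X (.inl i))))
    (hB : ∀ p : (∀ j : Ee, X (.inr j)) × (∀ i : Ei, X (.inl i)),
      p ∈ B ↔ ∀ v : V, (fun e : {e : Ei ⊕ Ee // Inc ends extEnd v e} =>
          combine p.2 p.1 e.1) ∈ C v)
    (Ccode : AddSubgroup (∀ j : Ee, X (.inr j)))
    (hCcode : ∀ xe : ∀ j : Ee, X (.inr j),
      xe ∈ Ccode ↔ ∃ xi : ∀ i : Ei, X (.inl i), (xe, xi) ∈ B)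
    (σ : ℕ)
    (hσ : σ = Nat.card {xi : ∀ i : Ei, X (.inl i) // ((0, xi) :
        (∀ j : Ee, X (.inr j)) × (∀ i : Ei, X (.inl i))) ∈ B}) :
    (∀ xe : ∀ j : Ee, X (.inr j),
        Zfun X ends extEnd f xe = (σ : ℂ) * (if xe ∈ Ccode then 1 else 0))
      ∧ ∀ ψe : ∀ j : Ee, AddChar (X (.inr j)) ℂ,
          Zfun (Xhat X) (dEnds ends) (dExtEnd extEnd) (dualF X ends extEnd f) ψe
            = (∏ i : Ei, (Fintype.card (X (.inl i)) : ℂ)) * (σ : ℂ)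
                * (Nat.card Ccode : ℂ)
                * (if (∀ c ∈ Ccode, ∏ j : Ee, ψe j (c j) = 1) then 1 else 0) := by
  have key : ∀ xe : ∀ j : Ee, X (.inr j),
      Zfun X ends extEnd f xe = (σ : ℂ) * (if xe ∈ Ccode then 1 else 0) := by
    intro xe
    unfold Zfun
    have hprod : ∀ xi : ∀ i : Ei, X (.inl i),
        (∏ v : V, f v fun e => combine xi xe e.1) = if (xe, xi) ∈ B then 1 else 0 := by
      intro xi
      simp_rw [hf]
      rw [Fintype.prod_boole]
      exact if_congr ((hB (xe, xi)).symm) rfl rfl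
    simp_rw [hprod]
    rw [fiber_count B xe, hσ]
    congr 1
    exact if_congr (Iff.symm (hCcode xe)) rfl rfl
  refine ⟨key, ?_⟩
  intro ψe
  classical
  have bsum : (∑ p : (∀ j : Ee, X (.inr j)) × (∀ i : Ei, X (.inl i)),
        if p ∈ B then ∏ j : Ee, ψe j (p.1 j) else 0)
      = (σ : ℂ) * ((Nat.card Ccode : ℂ)
          * (if (∀ c ∈ Ccode, ∏ j : Ee, ψe j (c j) = 1) then 1 else 0)) := by
    rw [Fintype.sum_prod_type]
    have h1 : ∀ xe' : ∀ j : Ee, X (.inr j),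
        (∑ xi : ∀ i : Ei, X (.inl i), if (xe', xi) ∈ B then (∏ j : Ee, ψe j (xe' j)) else 0)
          = (σ : ℂ) * ((if xe' ∈ Ccode then (1:ℂ) else 0) * ∏ j : Ee, ψe j (xe' j)) := by
      intro xe'
      have h2 : (∑ xi : ∀ i : Ei, X (.inl i), if (xe', xi) ∈ B then (∏ j : Ee, ψe j (xe' j)) else 0)
          = (∑ xi : ∀ i : Ei, X (.inl i), if (xe', xi) ∈ B then (1:ℂ) else 0)
              * ∏ j : Ee, ψe j (xe' j) := by
        rw [Finset.sum_mul]
        exact Finset.sum_congr rfl fun xi _ => by split_ifs <;> simp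
      rw [h2, fiber_count B xe', hσ]
      have h3 : (∃ xi, (xe', xi) ∈ B) ↔ xe' ∈ Ccode := (hCcode xe').symm
      rw [if_congr h3 rfl rfl, mul_assoc]
    simp_rw [h1]
    rw [← Finset.mul_sum]
    congr 1
    simp_rw [boole_mul]
    rw [← Finset.sum_filter]
    rw [Finset.sum_subtype (p := (· ∈ Ccode)) (Finset.univ.filter (· ∈ Ccode))
      (fun x => by simp) (fun xe' => ∏ j : Ee, ψe j (xe' j))]
    exact sum_char_subgroup (fun j => X (.inr j)) Ccode ψe
  unfold Zfun
  refine Eq.trans (sum_univ_inst _ Pi.instFintype _) ?_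
  refine Eq.trans (Fintype.sum_equiv
      (Equiv.sumPiEquivProdPi (fun e : Ei ⊕ Ei => Xhat X (.inl e)))
      (fun xi => ∏ w : V ⊕ Ei, dualF X ends extEnd f w fun e => combine xi ψe e.1)
      (fun p => ∏ w : V ⊕ Ei, dualF X ends extEnd f w fun e =>
          combine ((Equiv.sumPiEquivProdPi (fun e : Ei ⊕ Ei => Xhat X (.inl e))).symm p) ψe e.1)
      (fun xi => by simp only [Equiv.symm_apply_apply])) ?_
  rw [Fintype.sum_prod_type]
  simp_rw [Fintype.prod_sum_type]
  have hδ : ∀ (χ₁ χ₂ : ∀ i : Ei, AddChar (X (.inl i)) ℂ) (i : Ei),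
      dualF X ends extEnd f (.inr i)
        (fun e => combine ((Equiv.sumPiEquivProdPi
            (fun e : Ei ⊕ Ei => Xhat X (.inl e))).symm (χ₁, χ₂)) ψe e.1)
        = if χ₁ i * χ₂ i = 1 then (1:ℂ) else 0 := fun _ _ _ => rfl
  simp_rw [hδ]
  have hδ2 : ∀ χ₁ χ₂ : ∀ i : Ei, AddChar (X (.inl i)) ℂ,
      (∏ i : Ei, if χ₁ i * χ₂ i = 1 then (1:ℂ) else 0)
        = if χ₂ = (fun i => (χ₁ i)⁻¹) then 1 else 0 := by
    intro χ₁ χ₂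
    rw [Fintype.prod_boole]
    exact if_congr ((forall_congr' fun i => mul_eq_one_iff_eq_inv').trans funext_iff.symm)
      rfl rfl
  simp_rw [hδ2, mul_ite, mul_one, mul_zero]
  simp_rw [Finset.sum_ite_eq' Finset.univ, Finset.mem_univ, if_true]
  have hdual : ∀ (v : V) (ψ : (e' : {e' : (Ei ⊕ Ei) ⊕ Ee //
      Inc (dEnds ends) (dExtEnd extEnd) (.inl v) e'}) → Xhat X e'.1),
      dualF X ends extEnd f (.inl v) ψ
        = ∑ xv : (e : {e : Ei ⊕ Ee // Inc ends extEnd v e}) → X e.1,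
            f v xv * ∏ e : {e : Ei ⊕ Ee // Inc ends extEnd v e},
              (charAt X ends extEnd v ψ e) (xv e) := fun _ _ => rfl
  simp_rw [hdual]
  simp_rw [Finset.prod_univ_sum, Fintype.piFinset_univ]
  rw [Finset.sum_comm]
  simp_rw [Finset.prod_mul_distrib]
  have hsplit : ∀ (χ : ∀ i : Ei, AddChar (X (.inl i)) ℂ)
      (x : ∀ v : V, (e : {e : Ei ⊕ Ee // Inc ends extEnd v e}) → X e.1),
      (∏ v : V, ∏ e : {e : Ei ⊕ Ee // Inc ends extEnd v e},
        (charAt X ends extEnd v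
          (fun e' => combine ((Equiv.sumPiEquivProdPi
            (fun e : Ei ⊕ Ei => Xhat X (.inl e))).symm (χ, fun i => (χ i)⁻¹)) ψe e'.1) e)
          (x v e))
      = (∏ i : Ei, χ i (x (ends i).1 ⟨.inl i, Or.inl rfl⟩
            - x (ends i).2 ⟨.inl i, Or.inr rfl⟩))
        * ∏ j : Ee, ψe j (x (extEnd j) ⟨.inr j, rfl⟩) := by
    intro χ x
    rw [prod_incident ends extEnd hne]
    congr 1
    apply Finset.prod_congr rfl
    intro i _
    have e1 : (charAt X ends extEnd (ends i).1
        (fun e' => combine ((Equiv.sumPiEquivProdPi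
          (fun e : Ei ⊕ Ei => Xhat X (.inl e))).symm (χ, fun i => (χ i)⁻¹)) ψe e'.1)
        ⟨.inl i, Or.inl rfl⟩) = χ i := by
      simp only [charAt]
      rfl
    have e2 : (charAt X ends extEnd (ends i).2
        (fun e' => combine ((Equiv.sumPiEquivProdPi
          (fun e : Ei ⊕ Ei => Xhat X (.inl e))).symm (χ, fun i => (χ i)⁻¹)) ψe e'.1)
        ⟨.inl i, Or.inr rfl⟩) = (χ i)⁻¹ := by
      simp only [charAt]
      rw [dif_neg (hne i)]
      rfl
    rw [e1, e2, AddChar.inv_apply, ← AddChar.map_add_eq_mul, ← sub_eq_add_neg]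
  simp_rw [hsplit]
  simp_rw [← Finset.mul_sum, ← Finset.sum_mul]
  simp_rw [char_pi_sum (fun i : Ei => X (.inl i))]
  simp_rw [sub_eq_zero]
  simp_rw [hf, Fintype.prod_boole]
  have hcomb : ∀ (P Q : Prop) (_ : Decidable P) (_ : Decidable Q) (w : ℂ),
      (if P then (1:ℂ) else 0) * (((∏ i : Ei, (Fintype.card (X (.inl i)) : ℂ))
        * if Q then (1:ℂ) else 0) * w)
      = (∏ i : Ei, (Fintype.card (X (.inl i)) : ℂ)) * (if P ∧ Q then w else 0) := by
    intro P Q _ _ w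
    by_cases hP : P <;> by_cases hQ : Q <;> simp [hP, hQ]

  simp_rw [hcomb]
  rw [← Finset.mul_sum]
  refine Eq.trans (congrArg (fun z => (∏ i : Ei, (Fintype.card (X (.inl i)) : ℂ)) * z)
    (Eq.trans (glue_sum X ends extEnd C B hB
      (fun xe' => ∏ j : Ee, ψe j (xe' j))) bsum)) ?_
  by_cases h : ∀ c ∈ Ccode, ∏ j : Ee, ψe j (c j) = 1 <;> simp [h] <;> ring
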